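/- Exact continuous relaxation: Assume assoc_S(A) > 0 for every nonempty A ⊆ V'. Fix γ ≥ 0 and define R(A) = vol_g(A) + ν_S·unit(A) + γ·pen(A). Then assoc_S^L(f) > 0 for every f : V' → ℝ with f ≥ 0 and f ≠ 0, and inf over all such f of R^L(f)/assoc_S^L(f) equals min over nonempty A ⊆ V' of R(A)/assoc_S(A). Moreover, if f* ≥ 0, f* ≠ 0 attains this infimum, then any threshold set A_i(f*) = {j ∈ V' : f*(j) ≥ f*(i)} (i ∈ V') minimizing R(A_i(f*))/assoc_S(A_i(f*)) attains the minimum of R(A)/assoc_S(A) over nonempty A ⊆ V'. -/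

import Mathlib

open Finset

/-- `Vp S` is the set of experts `V' = V \ S`, as a subtype. -/
abbrev Vp {V : Type*} [Fintype V] [DecidableEq V] (S : Finset V) := {x : V // x ∉ S}

/-- The Lovász extension of a set function `T` (with `T ∅ = 0`): choosing an enumeration
`σ(1), …, σ(m)` of the ground set with `f ∘ σ` nondecreasing (here produced by `Tuple.sort`),
`T^L(f) = ∑_{i=1}^{m−1} T({σ(i+1),…,σ(m)})·(f(σ(i+1)) − f(σ(i))) + T(V')·f(σ(1))`. -/
noncomputable def lovasz {α : Type*} [Fintype α] [DecidableEq α]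
    (T : Finset α → ℝ) (f : α → ℝ) : ℝ :=
  let m := Fintype.card α
  let e : Fin m ≃ α := (Fintype.equivFin α).symm
  let σ : Fin m → α := fun i => e (Tuple.sort (f ∘ e) i)
  (∑ i : Fin m, if h : (i : ℕ) + 1 < m then
      T ((Finset.Ici (⟨(i : ℕ) + 1, h⟩ : Fin m)).image σ) * (f (σ ⟨(i : ℕ) + 1, h⟩) - f (σ i))
    else 0)
  + T Finset.univ * (if h : 0 < m then f (σ ⟨0, h⟩) else 0)

/-- The threshold set `A_i(f) = {j ∈ V' : f(j) ≥ f(i)}`. -/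
noncomputable def thresholdSet {α : Type*} [Fintype α] [DecidableEq α]
    (f : α → ℝ) (i : α) : Finset α :=
  Finset.univ.filter (fun j => f i ≤ f j)


section Aux
set_option linter.unusedSectionVars false
variable {α : Type*} [Fintype α] [DecidableEq α] (f : α → ℝ)

/-- the sorting enumeration used in `lovasz` -/
noncomputable def lsig : Fin (Fintype.card α) → α :=
  fun i => (Fintype.equivFin α).symm (Tuple.sort (f ∘ (Fintype.equivFin α).symm) i)

lemma lovasz_eq (T : Finset α → ℝ) :
    lovasz T f =
      (∑ i : Fin (Fintype.card α), if h : (i : ℕ) + 1 < Fintype.card α then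
        T ((Finset.Ici (⟨(i : ℕ) + 1, h⟩ : Fin (Fintype.card α))).image (lsig f))
          * (f (lsig f ⟨(i : ℕ) + 1, h⟩) - f (lsig f i))
      else 0)
      + T Finset.univ * (if h : 0 < Fintype.card α then f (lsig f ⟨0, h⟩) else 0) := rfl

lemma lsig_mono : Monotone (fun i => f (lsig f i)) :=
  Tuple.monotone_sort (f ∘ (Fintype.equivFin α).symm)

lemma lsig_bijective : Function.Bijective (lsig f) :=
  (Fintype.equivFin α).symm.bijective.comp (Tuple.sort (f ∘ (Fintype.equivFin α).symm)).bijective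


lemma lsig_surj (x : α) : ∃ t, lsig f t = x := (lsig_bijective f).2 x

/-- threshold identification at a strict jump -/
lemma image_Ici_eq_threshold {i : Fin (Fintype.card α)} (h : (i : ℕ) + 1 < Fintype.card α)
    (hlt : f (lsig f i) < f (lsig f ⟨(i : ℕ) + 1, h⟩)) :
    (Finset.Ici (⟨(i : ℕ) + 1, h⟩ : Fin (Fintype.card α))).image (lsig f)
      = thresholdSet f (lsig f ⟨(i : ℕ) + 1, h⟩) := by
  ext x
  simp only [thresholdSet, Finset.mem_image, Finset.mem_Ici, Finset.mem_filter,
    Finset.mem_univ, true_and]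
  constructor
  · rintro ⟨j, hj, rfl⟩
    exact lsig_mono f hj
  · intro hx
    obtain ⟨t, rfl⟩ := lsig_surj f x
    refine ⟨t, ?_, rfl⟩
    by_contra hti
    push_neg at hti
    have ht : t ≤ i := by
      have h1 : (t : ℕ) < (i : ℕ) + 1 := hti
      exact Fin.le_def.mpr (by omega)
    exact absurd (hx.trans (lsig_mono f ht)) (not_le.mpr hlt)

lemma univ_eq_threshold (h : 0 < Fintype.card α) :
    (Finset.univ : Finset α) = thresholdSet f (lsig f ⟨0, h⟩) := by
  symm
  rw [Finset.eq_univ_iff_forall]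
  intro x
  obtain ⟨t, rfl⟩ := lsig_surj f x
  simp only [thresholdSet, Finset.mem_filter, Finset.mem_univ, true_and]
  exact lsig_mono f (Fin.le_def.mpr (Nat.zero_le _))

lemma lsig_le_max (h : 0 < Fintype.card α) (x : α) :
    f x ≤ f (lsig f ⟨Fintype.card α - 1, by omega⟩) := by
  obtain ⟨t, rfl⟩ := lsig_surj f x
  exact lsig_mono f (by simp [Fin.le_iff_val_le_val]; omega)

lemma mem_thresholdSet_self (i : α) : i ∈ thresholdSet f i := by
  simp [thresholdSet]

/-- telescoping -/
lemma fin_telescope {m : ℕ} (hm : 0 < m) (g : Fin m → ℝ) :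
    (∑ i : Fin m, if h : (i : ℕ) + 1 < m then g ⟨(i : ℕ) + 1, h⟩ - g i else 0)
      = g ⟨m - 1, by omega⟩ - g ⟨0, hm⟩ := by
  set G : ℕ → ℝ := fun n => if h : n < m then g ⟨n, h⟩ else 0 with hG
  have key : ∀ i : Fin m, (if h : (i : ℕ) + 1 < m then g ⟨(i : ℕ) + 1, h⟩ - g i else 0)
      = (fun n => if n + 1 < m then G (n + 1) - G n else 0) (i : ℕ) := by
    intro i
    by_cases h : (i : ℕ) + 1 < m <;> simp [h, hG, i.2]
  calc (∑ i : Fin m, if h : (i : ℕ) + 1 < m then g ⟨(i : ℕ) + 1, h⟩ - g i else 0)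
      = ∑ i : Fin m, (fun n => if n + 1 < m then G (n + 1) - G n else 0) (i : ℕ) :=
        Finset.sum_congr rfl (fun i _ => key i)
    _ = ∑ n ∈ Finset.range m, (if n + 1 < m then G (n + 1) - G n else 0) :=
        Fin.sum_univ_eq_sum_range (fun n => if n + 1 < m then G (n + 1) - G n else 0) m
    _ = ∑ n ∈ Finset.range (m - 1), (G (n + 1) - G n) := by
        rw [← Finset.sum_subset (Finset.range_subset_range.mpr (by omega : m - 1 ≤ m))]
        · exact Finset.sum_congr rfl (fun n hn => by
            rw [Finset.mem_range] at hn; rw [if_pos (by omega)])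
        · intro n hn hn'
          rw [Finset.mem_range] at hn; rw [Finset.mem_range] at hn'
          rw [if_neg (by omega)]
    _ = G (m - 1) - G 0 := Finset.sum_range_sub G (m - 1)
    _ = g ⟨m - 1, by omega⟩ - g ⟨0, hm⟩ := by
        rw [hG]; simp only [dif_pos (show m - 1 < m by omega), dif_pos hm]


lemma lsig_min_le (h : 0 < Fintype.card α) (x : α) :
    f (lsig f ⟨0, h⟩) ≤ f x := by
  obtain ⟨t, rfl⟩ := lsig_surj f x
  exact lsig_mono f (Fin.le_def.mpr (Nat.zero_le _))

/-- master comparison lemma -/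
lemma lovasz_master [Nonempty α] (T T' : Finset α → ℝ) (r : ℝ)
    (hf0 : ∀ i, 0 ≤ f i)
    (h : ∀ i : α, r * T' (thresholdSet f i) ≤ T (thresholdSet f i)) :
    r * lovasz T' f ≤ lovasz T f := by
  have hm : 0 < Fintype.card α := Fintype.card_pos
  rw [lovasz_eq, lovasz_eq, mul_add, Finset.mul_sum]
  refine add_le_add (Finset.sum_le_sum fun i _ => ?_) ?_
  · by_cases hi : (i : ℕ) + 1 < Fintype.card α
    · rw [dif_pos hi, dif_pos hi]
      have hle : f (lsig f i) ≤ f (lsig f ⟨(i : ℕ) + 1, hi⟩) :=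
        lsig_mono f (by simp [Fin.le_def])
      rcases eq_or_lt_of_le hle with heq | hlt
      · rw [← heq, sub_self, mul_zero, mul_zero, mul_zero]
      · rw [image_Ici_eq_threshold f hi hlt, ← mul_assoc]
        exact mul_le_mul_of_nonneg_right (h _) (by linarith)
    · rw [dif_neg hi, dif_neg hi, mul_zero]
  · rw [dif_pos hm, ← mul_assoc]
    have hu := h (lsig f ⟨0, hm⟩)
    rw [← univ_eq_threshold f hm] at hu
    exact mul_le_mul_of_nonneg_right hu (hf0 _)

/-- Lovász extension of the indicator of a nonempty set -/
lemma lovasz_indicator [Nonempty α] (T : Finset α → ℝ) (A : Finset α) (hA : A.Nonempty) :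
    lovasz T (fun x => if x ∈ A then (1 : ℝ) else 0) = T A := by
  have hm : 0 < Fintype.card α := Fintype.card_pos
  set f : α → ℝ := fun x => if x ∈ A then (1 : ℝ) else 0 with hf
  have hf01 : ∀ x, f x = 0 ∨ f x = 1 := by
    intro x; by_cases hx : x ∈ A <;> simp [hf, hx]
  have hth : ∀ x, f x = 1 → thresholdSet f x = A := by
    intro x hx
    ext y
    simp only [thresholdSet, Finset.mem_filter, Finset.mem_univ, true_and, hx]
    constructor
    · intro hy
      rcases hf01 y with h0 | h1
      · rw [h0] at hy; linarith
      · by_contra hyA; simp [hf, hyA] at h1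
    · intro hyA; simp [hf, hyA]
  have key : ∀ i ∈ (Finset.univ : Finset (Fin (Fintype.card α))),
      (if h : (i : ℕ) + 1 < Fintype.card α then
        T ((Finset.Ici (⟨(i : ℕ) + 1, h⟩ : Fin (Fintype.card α))).image (lsig f))
          * (f (lsig f ⟨(i : ℕ) + 1, h⟩) - f (lsig f i))
      else 0)
      = T A * (if h : (i : ℕ) + 1 < Fintype.card α then
          f (lsig f ⟨(i : ℕ) + 1, h⟩) - f (lsig f i) else 0) := by
    intro i _
    by_cases hi : (i : ℕ) + 1 < Fintype.card α
    · rw [dif_pos hi, dif_pos hi]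
      have hle : f (lsig f i) ≤ f (lsig f ⟨(i : ℕ) + 1, hi⟩) :=
        lsig_mono f (by simp [Fin.le_def])
      rcases eq_or_lt_of_le hle with heq | hlt
      · rw [← heq, sub_self, mul_zero, mul_zero]
      · have h1 : f (lsig f ⟨(i : ℕ) + 1, hi⟩) = 1 := by
          rcases hf01 (lsig f ⟨(i : ℕ) + 1, hi⟩) with h0 | h1
          · exfalso
            rw [h0] at hlt
            rcases hf01 (lsig f i) with g0 | g1
            · rw [g0] at hlt; linarith
            · rw [g1] at hlt; linarith
          · exact h1
        rw [image_Ici_eq_threshold f hi hlt, hth _ h1]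
    · rw [dif_neg hi, dif_neg hi, mul_zero]
  rw [lovasz_eq, Finset.sum_congr rfl key, ← Finset.mul_sum]
  have tel := fin_telescope hm (fun j => f (lsig f j))
  rw [tel, dif_pos hm]
  by_cases hAu : A = Finset.univ
  · have h1 : ∀ x, f x = 1 := by intro x; simp [hf, hAu]
    simp only [h1, hAu]; ring
  · obtain ⟨b, hb⟩ : ∃ b, b ∉ A := by
      by_contra hcon; push_neg at hcon
      exact hAu (Finset.eq_univ_iff_forall.mpr hcon)
    have hfb : f b = 0 := by simp [hf, hb]
    have hmax : f (lsig f ⟨Fintype.card α - 1, by omega⟩) = 1 := by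
      obtain ⟨a, ha⟩ := hA
      have hle := lsig_le_max f hm a
      have hfa : f a = 1 := by simp [hf, ha]
      rcases hf01 (lsig f ⟨Fintype.card α - 1, by omega⟩) with h0 | h1
      · rw [h0] at hle; rw [hfa] at hle; linarith
      · exact h1
    have hmin : f (lsig f ⟨0, hm⟩) = 0 := by
      have hle := lsig_min_le f hm b
      rw [hfb] at hle
      rcases hf01 (lsig f ⟨0, hm⟩) with h0 | h1
      · exact h0
      · rw [h1] at hle; linarith
    rw [hmax, hmin]; ring

/-- Lovász extension of the `unit` set function is the max of `f`. -/
lemma lovasz_unit [Nonempty α] :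
    lovasz (fun A : Finset α => if A = ∅ then (0 : ℝ) else 1) f
      = f (lsig f ⟨Fintype.card α - 1, by have := Fintype.card_pos (α := α); omega⟩) := by
  have hm : 0 < Fintype.card α := Fintype.card_pos
  have key : ∀ i ∈ (Finset.univ : Finset (Fin (Fintype.card α))),
      (if h : (i : ℕ) + 1 < Fintype.card α then
        (fun A : Finset α => if A = ∅ then (0 : ℝ) else 1)
          ((Finset.Ici (⟨(i : ℕ) + 1, h⟩ : Fin (Fintype.card α))).image (lsig f))
          * (f (lsig f ⟨(i : ℕ) + 1, h⟩) - f (lsig f i))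
      else 0)
      = (if h : (i : ℕ) + 1 < Fintype.card α then
          f (lsig f ⟨(i : ℕ) + 1, h⟩) - f (lsig f i) else 0) := by
    intro i _
    by_cases hi : (i : ℕ) + 1 < Fintype.card α
    · rw [dif_pos hi, dif_pos hi]
      have hne : ((Finset.Ici (⟨(i : ℕ) + 1, hi⟩ : Fin (Fintype.card α))).image (lsig f)) ≠ ∅ :=
        (Finset.Nonempty.image ⟨_, Finset.mem_Ici.mpr le_rfl⟩ _).ne_empty
      simp only [hne, if_false, one_mul]
    · rw [dif_neg hi, dif_neg hi]
  rw [lovasz_eq, Finset.sum_congr rfl key]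
  have tel := fin_telescope hm (fun j => f (lsig f j))
  rw [tel, dif_pos hm]
  have hne : (Finset.univ : Finset α) ≠ ∅ := Finset.univ_nonempty.ne_empty
  simp only [hne, if_false, one_mul]
  ring

/-- positivity of the Lovász extension -/
lemma lovasz_pos [Nonempty α] (T : Finset α → ℝ) (hT : ∀ A : Finset α, A.Nonempty → 0 < T A)
    (hf0 : ∀ i, 0 ≤ f i) (hfne : f ≠ 0) : 0 < lovasz T f := by
  have hm : 0 < Fintype.card α := Fintype.card_pos
  obtain ⟨i0, _, hi0⟩ := Finset.exists_min_image (Finset.univ : Finset α)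
    (fun i => T (thresholdSet f i)) Finset.univ_nonempty
  set ε := T (thresholdSet f i0) with hε
  have hεpos : 0 < ε := hT _ (⟨i0, mem_thresholdSet_self f i0⟩ : (thresholdSet f i0).Nonempty)
  have hmaster := lovasz_master f T (fun A : Finset α => if A = ∅ then (0 : ℝ) else 1) ε hf0 ?_
  · have hunit := lovasz_unit f
    have hj : ∃ j, 0 < f j := by
      by_contra hcon; push_neg at hcon
      exact hfne (funext fun j => le_antisymm (hcon j) (hf0 j))
    obtain ⟨j, hj⟩ := hj
    have hmax := lsig_le_max f hm j
    calc (0 : ℝ) < ε * f (lsig f ⟨Fintype.card α - 1, by omega⟩) :=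
          mul_pos hεpos (lt_of_lt_of_le hj hmax)
      _ = ε * lovasz (fun A : Finset α => if A = ∅ then (0 : ℝ) else 1) f := by rw [lovasz_unit]
      _ ≤ lovasz T f := hmaster
  · intro i
    have hne : thresholdSet f i ≠ ∅ := Finset.Nonempty.ne_empty ⟨i, mem_thresholdSet_self f i⟩
    simp only [hne, if_false, mul_one]
    exact hi0 i (Finset.mem_univ i)

end Aux

theorem exact_continuous_relaxation_core
    {α : Type*} [Fintype α] [DecidableEq α] [Nonempty α]
    (assocS R : Finset α → ℝ)
    (hassoc_pos : ∀ A : Finset α, A.Nonempty → 0 < assocS A) :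
    (∀ f : α → ℝ, (∀ i, 0 ≤ f i) → f ≠ 0 → 0 < lovasz assocS f)
    ∧ sInf {x : ℝ | ∃ f : α → ℝ, (∀ i, 0 ≤ f i) ∧ f ≠ 0 ∧
          x = lovasz R f / lovasz assocS f}
        = sInf {x : ℝ | ∃ A : Finset α, A.Nonempty ∧ x = R A / assocS A}
    ∧ ∀ f : α → ℝ, (∀ i, 0 ≤ f i) → f ≠ 0 →
        lovasz R f / lovasz assocS f
          = sInf {x : ℝ | ∃ f' : α → ℝ, (∀ i, 0 ≤ f' i) ∧ f' ≠ 0 ∧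
              x = lovasz R f' / lovasz assocS f'} →
        ∀ i : α,
          (∀ i' : α, R (thresholdSet f i) / assocS (thresholdSet f i)
              ≤ R (thresholdSet f i') / assocS (thresholdSet f i')) →
          ∀ B : Finset α, B.Nonempty →
            R (thresholdSet f i) / assocS (thresholdSet f i) ≤ R B / assocS B := by
  set C := {x : ℝ | ∃ f : α → ℝ, (∀ i, 0 ≤ f i) ∧ f ≠ 0 ∧
      x = lovasz R f / lovasz assocS f} with hC
  set D := {x : ℝ | ∃ A : Finset α, A.Nonempty ∧ x = R A / assocS A} with hD
  have hpos : ∀ f : α → ℝ, (∀ i, 0 ≤ f i) → f ≠ 0 → 0 < lovasz assocS f := by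
    intro f h1 h2
    exact lovasz_pos f assocS hassoc_pos h1 h2
  -- facts about D
  have hDfin : D.Finite :=
    Set.Finite.subset (Set.finite_range (fun A : Finset α => R A / assocS A))
      (by rintro x ⟨A, _, rfl⟩; exact ⟨A, rfl⟩)
  have hDne : D.Nonempty := ⟨R Finset.univ / assocS Finset.univ,
    Finset.univ, Finset.univ_nonempty, rfl⟩
  have hrD : sInf D ∈ D := hDne.csInf_mem hDfin
  have hrlb : ∀ x ∈ D, sInf D ≤ x := fun x hx => csInf_le hDfin.bddBelow hx
  -- key ratio bound
  have hkey : ∀ f : α → ℝ, (∀ i, 0 ≤ f i) → f ≠ 0 → ∀ r' : ℝ,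
      (∀ i : α, r' ≤ R (thresholdSet f i) / assocS (thresholdSet f i)) →
      r' ≤ lovasz R f / lovasz assocS f := by
    intro f h1 h2 r' hr'
    have hm : ∀ i : α, r' * assocS (thresholdSet f i) ≤ R (thresholdSet f i) := by
      intro i
      exact (le_div_iff₀ (hassoc_pos _ ⟨i, mem_thresholdSet_self f i⟩)).mp (hr' i)
    have := lovasz_master f R assocS r' h1 hm
    exact (le_div_iff₀ (hpos f h1 h2)).mpr this
  refine ⟨hpos, ?_, ?_⟩
  · -- equality of infima
    have hCne : C.Nonempty := by
      refine ⟨lovasz R (fun _ => 1) / lovasz assocS (fun _ => 1), fun _ => 1,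
        fun _ => zero_le_one, ?_, rfl⟩
      intro hcon
      have := congrFun hcon (Classical.arbitrary α)
      norm_num at this
    have hClb : ∀ x ∈ C, sInf D ≤ x := by
      rintro x ⟨f, h1, h2, rfl⟩
      refine hkey f h1 h2 _ (fun i => hrlb _ ?_)
      exact ⟨thresholdSet f i, ⟨i, mem_thresholdSet_self f i⟩, rfl⟩
    have h1 : sInf D ≤ sInf C := le_csInf hCne hClb
    have h2 : sInf C ≤ sInf D := by
      obtain ⟨A0, hA0, hr0⟩ := hrD
      have hmem : sInf D ∈ C := by
        refine ⟨fun x => if x ∈ A0 then 1 else 0,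
          fun x => by by_cases hx : x ∈ A0 <;> simp [hx], ?_, ?_⟩
        · intro hcon
          obtain ⟨a, ha⟩ := hA0
          have := congrFun hcon a
          simp [ha] at this
        · rw [lovasz_indicator R A0 hA0, lovasz_indicator assocS A0 hA0]
          exact hr0
      exact csInf_le ⟨sInf D, hClb⟩ hmem
    exact le_antisymm h2 h1
  · -- part 3
    intro f h1 h2 heq i hmin B hB
    have hstep : R (thresholdSet f i) / assocS (thresholdSet f i)
        ≤ lovasz R f / lovasz assocS f := hkey f h1 h2 _ hmin
    have hBD : sInf D ≤ R B / assocS B := hrlb _ ⟨B, hB, rfl⟩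
    have hClb : ∀ x ∈ C, sInf D ≤ x := by
      rintro x ⟨f', h1', h2', rfl⟩
      refine hkey f' h1' h2' _ (fun i' => hrlb _ ?_)
      exact ⟨thresholdSet f' i', ⟨i', mem_thresholdSet_self f' i'⟩, rfl⟩
    have hCleD : sInf C ≤ sInf D := by
      obtain ⟨A0, hA0, hr0⟩ := hrD
      have hmem : sInf D ∈ C := by
        refine ⟨fun x => if x ∈ A0 then 1 else 0,
          fun x => by by_cases hx : x ∈ A0 <;> simp [hx], ?_, ?_⟩
        · intro hcon
          obtain ⟨a, ha⟩ := hA0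
          have := congrFun hcon a
          simp [ha] at this
        · rw [lovasz_indicator R A0 hA0, lovasz_indicator assocS A0 hA0]
          exact hr0
      exact csInf_le ⟨sInf D, hClb⟩ hmem
    calc R (thresholdSet f i) / assocS (thresholdSet f i)
        ≤ lovasz R f / lovasz assocS f := hstep
      _ = sInf C := heq
      _ ≤ sInf D := hCleD
      _ ≤ R B / assocS B := hBD
/-- **Exact continuous relaxation.** With `R(A) = vol_g(A) + ν_S·unit(A) + γ·pen(A)`:
`assoc_S^L(f) > 0` for all `f ≥ 0`, `f ≠ 0`; the infimum of `R^L(f)/assoc_S^L(f)` over such `f`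
equals the minimum of `R(A)/assoc_S(A)` over nonempty `A ⊆ V'`; and optimal thresholding of a
minimizer `f*` yields a set attaining the discrete minimum. -/
theorem exact_continuous_relaxation
    {V : Type*} [Fintype V] [DecidableEq V] (hV : Nonempty V)
    (w : V → V → ℝ) (hw_symm : ∀ i j, w i j = w j i) (hw_nonneg : ∀ i j, 0 ≤ w i j)
    (g : V → ℝ) (hg : ∀ i, 0 < g i)
    (S : Finset V) (hVp : Nonempty (Vp S))
    (p : ℕ) (hp : 1 ≤ p)
    (M : Fin p → Vp S → ℝ) (hM : ∀ j i, 0 ≤ M j i) (k l : Fin p → ℝ)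
    (dist : Vp S → Vp S → ℝ) (hdist_symm : ∀ u v, dist u v = dist v u)
    (hdist_nonneg : ∀ u v, 0 ≤ dist u v) (d0 : ℝ) (hd0 : 0 ≤ d0)
    -- the degree function d, the restricted degrees d^S, and the constants μ_S, ν_S
    (deg : V → ℝ) (hdeg : deg = fun i => ∑ j, w i j)
    (degS : Vp S → ℝ) (hdegS : degS = fun i => ∑ j ∈ S, w i.1 j)
    (muS nuS : ℝ) (hmuS : muS = ∑ i ∈ S, ∑ j ∈ S, w i j) (hnuS : nuS = ∑ i ∈ S, g i)
    -- assoc_S(A) = vol_d(A) − cut(A, V'∖A) + vol_{d^S}(A) + μ_S·unit(A)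
    (assocS : Finset (Vp S) → ℝ)
    (hassocS : assocS = fun A => (∑ i ∈ A, deg i.1) - (∑ i ∈ A, ∑ j ∈ Aᶜ, w i.1 j.1)
        + (∑ i ∈ A, degS i) + muS * (if A = ∅ then 0 else 1))
    -- the penalty function
    (pen : Finset (Vp S) → ℝ)
    (hpen : pen = fun A => if A = ∅ then 0 else
        (∑ j, max 0 ((∑ i ∈ A, M j i) - l j)) + (∑ j, max 0 (k j - ∑ i ∈ A, M j i))
        + ∑ u ∈ A, ∑ v ∈ A, max 0 (dist u v - d0))
    -- assumptions of the theorem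
    (hassoc_pos : ∀ A : Finset (Vp S), A.Nonempty → 0 < assocS A)
    (γ : ℝ) (hγ : 0 ≤ γ)
    -- R(A) = vol_g(A) + ν_S·unit(A) + γ·pen(A)
    (R : Finset (Vp S) → ℝ)
    (hR : R = fun A => (∑ i ∈ A, g i.1) + nuS * (if A = ∅ then 0 else 1) + γ * pen A) :
    -- 1) positivity of the Lovász extension of assoc_S on nonzero nonnegative vectors
    (∀ f : Vp S → ℝ, (∀ i, 0 ≤ f i) → f ≠ 0 → 0 < lovasz assocS f)
    -- 2) the infimum of the continuous ratio equals the discrete minimum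
    ∧ sInf {x : ℝ | ∃ f : Vp S → ℝ, (∀ i, 0 ≤ f i) ∧ f ≠ 0 ∧
          x = lovasz R f / lovasz assocS f}
        = sInf {x : ℝ | ∃ A : Finset (Vp S), A.Nonempty ∧ x = R A / assocS A}
    -- 3) optimal thresholding of a continuous minimizer yields a discrete minimizer
    ∧ ∀ f : Vp S → ℝ, (∀ i, 0 ≤ f i) → f ≠ 0 →
        lovasz R f / lovasz assocS f
          = sInf {x : ℝ | ∃ f' : Vp S → ℝ, (∀ i, 0 ≤ f' i) ∧ f' ≠ 0 ∧
              x = lovasz R f' / lovasz assocS f'} →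
        ∀ i : Vp S,
          (∀ i' : Vp S, R (thresholdSet f i) / assocS (thresholdSet f i)
              ≤ R (thresholdSet f i') / assocS (thresholdSet f i')) →
          ∀ B : Finset (Vp S), B.Nonempty →
            R (thresholdSet f i) / assocS (thresholdSet f i) ≤ R B / assocS B := by
  
  haveI : Nonempty (Vp S) := hVp
  exact exact_continuous_relaxation_core assocS R hassoc_pos
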